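/- Let X ⊆ {d,t,b,4,5}, and let r be an instance, with premises Γ₁, Γ₂ and conclusion Γ₃, of one of the rules ∧∘, ∨•, ⊃•, or cut. Then (fm(Γ₁)∧fm(Γ₂))⊃fm(Γ₃) is provable in HCK+X. -/

import Mathlib

/-! # Constructive modal logic: formulas and Hilbert systems -/

inductive Formula : Type
  | var : Nat → Formula
  | bot : Formula
  | and : Formula → Formula → Formula
  | or  : Formula → Formula → Formula
  | imp : Formula → Formula → Formula
  | box : Formula → Formula
  | dia : Formula → Formula
  deriving DecidableEq

/-- ⊤ abbreviates ⊥⊃⊥ -/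
def Formula.top : Formula := Formula.imp Formula.bot Formula.bot

/-- The five modal axioms d, t, b, 4, 5. -/
inductive Ax : Type
  | d | t | b | four | five
  deriving DecidableEq

/-- The formula scheme corresponding to each modal axiom. -/
def axForm : Ax → Formula → Formula
  | .d, A => Formula.imp (.box A) (.dia A)
  | .t, A => Formula.and (.imp A (.dia A)) (.imp (.box A) A)
  | .b, A => Formula.and (.imp A (.box (.dia A))) (.imp (.dia (.box A)) A)
  | .four, A => Formula.and (.imp (.dia (.dia A)) (.dia A)) (.imp (.box A) (.box (.box A)))
  | .five, A => Formula.and (.imp (.dia A) (.box (.dia A))) (.imp (.dia (.box A)) (.box A))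

/-- The Hilbert system HCK+X: a complete axiomatization of intuitionistic
propositional logic, plus k1 and k2, plus the modal axiom schemes in X,
closed under modus ponens and necessitation. -/
inductive Hck (X : Set Ax) : Formula → Prop
  | imp1 (A B : Formula) : Hck X (.imp A (.imp B A))
  | imp2 (A B C : Formula) :
      Hck X (.imp (.imp A (.imp B C)) (.imp (.imp A B) (.imp A C)))
  | andI (A B : Formula) : Hck X (.imp A (.imp B (.and A B)))
  | andE1 (A B : Formula) : Hck X (.imp (.and A B) A)
  | andE2 (A B : Formula) : Hck X (.imp (.and A B) B)
  | orI1 (A B : Formula) : Hck X (.imp A (.or A B))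
  | orI2 (A B : Formula) : Hck X (.imp B (.or A B))
  | orE (A B C : Formula) :
      Hck X (.imp (.imp A C) (.imp (.imp B C) (.imp (.or A B) C)))
  | exfalso (A : Formula) : Hck X (.imp .bot A)
  | k1 (A B : Formula) : Hck X (.imp (.box (.imp A B)) (.imp (.box A) (.box B)))
  | k2 (A B : Formula) : Hck X (.imp (.box (.imp A B)) (.imp (.dia A) (.dia B)))
  | ax {x : Ax} (A : Formula) : x ∈ X → Hck X (axForm x A)
  | mp {A B : Formula} : Hck X (.imp A B) → Hck X A → Hck X B
  | nec {A : Formula} : Hck X A → Hck X (.box A)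

/-! # Nested sequents -/

/-- LHS sequents: Φ ::= ∅ | A• | [Φ] | Φ,Φ -/
inductive LHS : Type
  | emp : LHS
  | fml : Formula → LHS
  | br : LHS → LHS
  | comma : LHS → LHS → LHS

/-- RHS sequents: Ψ ::= A∘ | [Φ,Ψ] -/
inductive RHS : Type
  | fml : Formula → RHS
  | br : LHS → RHS → RHS

/-- A full sequent: Φ,Ψ with exactly one output formula. -/
structure FullSeq where
  L : LHS
  R : RHS

/-- Corresponding formula of an LHS sequent. -/
def LHS.fm : LHS → Formula
  | .emp => Formula.top
  | .fml A => A
  | .br Φ => Formula.dia Φ.fm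
  | .comma Φ₁ Φ₂ => Formula.and Φ₁.fm Φ₂.fm

/-- Corresponding formula of an RHS sequent. -/
def RHS.fm : RHS → Formula
  | .fml A => A
  | .br Φ Ψ => Formula.box (Formula.imp Φ.fm Ψ.fm)

/-- Corresponding formula of a full sequent: fm(Φ,Ψ) = fm(Φ) ⊃ fm(Ψ). -/
def FullSeq.fm (S : FullSeq) : Formula := Formula.imp S.L.fm S.R.fm

/-! # Contexts -/

/-- An output context: Γ₁•,[Γ₂•,[…,[Γₙ•,{ }]…]]. -/
inductive OutCtx : Type
  | hole : LHS → OutCtx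
  | cons : LHS → OutCtx → OutCtx

/-- Filling an output context with an LHS sequent yields an LHS sequent. -/
def OutCtx.fillL : OutCtx → LHS → LHS
  | .hole Φ, Δ => Φ.comma Δ
  | .cons Φ C, Δ => Φ.comma (LHS.br (C.fillL Δ))

/-- Filling an output context with nothing (∅) yields an LHS sequent. -/
def OutCtx.fillE : OutCtx → LHS
  | .hole Φ => Φ
  | .cons Φ C => Φ.comma (LHS.br C.fillE)

/-- Filling an output context with an RHS sequent yields a full sequent. -/
def OutCtx.fillR : OutCtx → RHS → FullSeq
  | .hole Φ, Ψ => ⟨Φ, Ψ⟩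
  | .cons Φ C, Ψ => ⟨Φ, RHS.br (C.fillR Ψ).L (C.fillR Ψ).R⟩

/-- Filling an output context with a full sequent yields a full sequent. -/
def OutCtx.fillF : OutCtx → FullSeq → FullSeq
  | .hole Φ, S => ⟨Φ.comma S.L, S.R⟩
  | .cons Φ C, S => ⟨Φ, RHS.br (C.fillF S).L (C.fillF S).R⟩

/-- Depth of an output context: number of brackets around the hole. -/
def OutCtx.depth : OutCtx → Nat
  | .hole _ => 0
  | .cons _ C => C.depth + 1

def OutCtx.addL : LHS → OutCtx → OutCtx
  | Φ, .hole Φ' => .hole (Φ.comma Φ')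
  | Φ, .cons Φ' C => .cons (Φ.comma Φ') C

/-- Composition of output contexts (plugging one into the hole of the other). -/
def OutCtx.comp : OutCtx → OutCtx → OutCtx
  | .hole Φ, C => OutCtx.addL Φ C
  | .cons Φ C, C' => .cons Φ (C.comp C')

/-- An input context Γ'{Λ{ },Π∘} with Γ'{ }, Λ{ } output contexts, Π∘ an RHS
sequent.  Filled with an LHS sequent it yields a full sequent. -/
structure InCtx where
  outer : OutCtx
  inner : OutCtx
  out : RHS

/-- Filling an input context with an LHS sequent. -/
def InCtx.fill (G : InCtx) (Δ : LHS) : FullSeq :=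
  G.outer.fillF ⟨G.inner.fillL Δ, G.out⟩

/-- Output pruning Γ↓{ } = Γ'{Λ{ }} of an input context Γ'{Λ{ },Π∘}. -/
def InCtx.prune (G : InCtx) : OutCtx := G.outer.comp G.inner

/-- Depth of an input context. -/
def InCtx.depth (G : InCtx) : Nat := G.outer.depth + G.inner.depth

/-- [Φ]ⁿ : n brackets around an LHS sequent. -/
def LHS.brn : Nat → LHS → LHS
  | 0, Φ => Φ
  | n+1, Φ => LHS.br (LHS.brn n Φ)

/-- [Σ]ⁿ : n brackets around a full sequent (as a full sequent). -/
def FullSeq.nest : Nat → FullSeq → FullSeq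
  | 0, S => S
  | n+1, S => ⟨LHS.emp, RHS.br (FullSeq.nest n S).L (FullSeq.nest n S).R⟩

/-! # Equivalence of sequents (associativity/commutativity/unit of comma) -/

inductive SEqL : LHS → LHS → Prop
  | refl (Φ : LHS) : SEqL Φ Φ
  | symm {a b : LHS} : SEqL a b → SEqL b a
  | trans {a b c : LHS} : SEqL a b → SEqL b c → SEqL a c
  | comm (a b : LHS) : SEqL (a.comma b) (b.comma a)
  | assoc (a b c : LHS) : SEqL ((a.comma b).comma c) (a.comma (b.comma c))
  | unit (a : LHS) : SEqL (LHS.emp.comma a) a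
  | congComma {a a' b b' : LHS} : SEqL a a' → SEqL b b' → SEqL (a.comma b) (a'.comma b')
  | congBr {a a' : LHS} : SEqL a a' → SEqL a.br a'.br

inductive SEqR : RHS → RHS → Prop
  | refl (Ψ : RHS) : SEqR Ψ Ψ
  | symm {a b : RHS} : SEqR a b → SEqR b a
  | trans {a b c : RHS} : SEqR a b → SEqR b c → SEqR a c
  | congBr {Φ Φ' : LHS} {Ψ Ψ' : RHS} :
      SEqL Φ Φ' → SEqR Ψ Ψ' → SEqR (RHS.br Φ Ψ) (RHS.br Φ' Ψ')

def SEq (S T : FullSeq) : Prop := SEqL S.L T.L ∧ SEqR S.R T.R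

/-! # Inference rules -/

inductive RuleName : Type
  | id | botL | andL | andR | orL | orR | impL | impR
  | boxL | boxR | diaL | diaHatL | diaR | cont
  | weak | cut | nec
  | dDiaR | dBoxL | tDiaR | tBoxL | fourDiaR | fourBoxL
  | dSt | tSt | bSt | fourSt | fiveSt
  | s4R | s4L | s4Rdia | s4Lbox
  | sbSt | s5St | s5bSt | sb5St
  deriving DecidableEq

/-- Rule instances: `Step r prems concl` means that inferring the full sequent
`concl` from the list of full sequents `prems` is an instance of the rule `r`. -/
inductive Step : RuleName → List FullSeq → FullSeq → Prop
  /- id: Γ{a•,a∘} -/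
  | id (Γ : OutCtx) (a : Nat) :
      Step .id [] (Γ.fillF ⟨.fml (.var a), .fml (.var a)⟩)
  /- ⊥•: Γ{⊥•,Π∘} -/
  | botL (Γ : OutCtx) (Pn : RHS) :
      Step .botL [] (Γ.fillF ⟨.fml .bot, Pn⟩)
  /- ∧•: from Γ{A•,B•} infer Γ{(A∧B)•} -/
  | andL (Γ : InCtx) (A B : Formula) :
      Step .andL [Γ.fill ((LHS.fml A).comma (.fml B))] (Γ.fill (.fml (A.and B)))
  /- ∧∘: from Γ{A∘} and Γ{B∘} infer Γ{(A∧B)∘} -/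
  | andR (Γ : OutCtx) (A B : Formula) :
      Step .andR [Γ.fillR (.fml A), Γ.fillR (.fml B)] (Γ.fillR (.fml (A.and B)))
  /- ∨•: from Γ{A•,Π∘} and Γ{B•,Π∘} infer Γ{(A∨B)•,Π∘} -/
  | orL (Γ : OutCtx) (Pn : RHS) (A B : Formula) :
      Step .orL [Γ.fillF ⟨.fml A, Pn⟩, Γ.fillF ⟨.fml B, Pn⟩]
        (Γ.fillF ⟨.fml (A.or B), Pn⟩)
  /- ∨∘: from Γ{A∘} (or Γ{B∘}) infer Γ{(A∨B)∘} -/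
  | orR1 (Γ : OutCtx) (A B : Formula) :
      Step .orR [Γ.fillR (.fml A)] (Γ.fillR (.fml (A.or B)))
  | orR2 (Γ : OutCtx) (A B : Formula) :
      Step .orR [Γ.fillR (.fml B)] (Γ.fillR (.fml (A.or B)))
  /- ⊃•: from Γ↓{A∘} and Γ{B•} infer Γ{(A⊃B)•} -/
  | impL (Γ : InCtx) (A B : Formula) :
      Step .impL [Γ.prune.fillR (.fml A), Γ.fill (.fml B)] (Γ.fill (.fml (A.imp B)))
  /- ⊃∘: from Γ{A•,B∘} infer Γ{(A⊃B)∘} -/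
  | impR (Γ : OutCtx) (A B : Formula) :
      Step .impR [Γ.fillF ⟨.fml A, .fml B⟩] (Γ.fillR (.fml (A.imp B)))
  /- □•: from Γ{[A•,Δ]} infer Γ{(□A)•,[Δ]}, output elsewhere resp. in Δ -/
  | boxLIn (Γ : InCtx) (Δ : LHS) (A : Formula) :
      Step .boxL [Γ.fill (LHS.br ((LHS.fml A).comma Δ))]
        (Γ.fill ((LHS.fml A.box).comma Δ.br))
  | boxLOut (Γ : OutCtx) (Δ : FullSeq) (A : Formula) :
      Step .boxL [Γ.fillR (.br ((LHS.fml A).comma Δ.L) Δ.R)]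
        (Γ.fillF ⟨.fml A.box, .br Δ.L Δ.R⟩)
  /- □∘: from Γ{[A∘]} infer Γ{(□A)∘} -/
  | boxR (Γ : OutCtx) (A : Formula) :
      Step .boxR [Γ.fillR (.br .emp (.fml A))] (Γ.fillR (.fml A.box))
  /- ◇•: from Γ{[A•]} infer Γ{(◇A)•} -/
  | diaL (Γ : InCtx) (A : Formula) :
      Step .diaL [Γ.fill (LHS.br (.fml A))] (Γ.fill (.fml A.dia))
  /- ◇̂•: from Γ{[A•],Π∘} infer Γ{(◇A)•,Π∘} -/
  | diaHatL (Γ : OutCtx) (Pn : RHS) (A : Formula) :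
      Step .diaHatL [Γ.fillF ⟨LHS.br (.fml A), Pn⟩] (Γ.fillF ⟨.fml A.dia, Pn⟩)
  /- ◇∘: from Γ{[A∘,Δ]} infer Γ{(◇A)∘,[Δ]} -/
  | diaR (Γ : OutCtx) (Δ : LHS) (A : Formula) :
      Step .diaR [Γ.fillR (.br Δ (.fml A))] (Γ.fillF ⟨Δ.br, .fml A.dia⟩)
  /- cont: from Γ{Δ•,Δ•} infer Γ{Δ•} -/
  | cont (Γ : InCtx) (Δ : LHS) :
      Step .cont [Γ.fill (Δ.comma Δ)] (Γ.fill Δ)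
  /- weak: from Γ{∅} infer Γ{Δ•} -/
  | weak (Γ : InCtx) (Δ : LHS) :
      Step .weak [Γ.fill .emp] (Γ.fill Δ)
  /- cut: from Γ↓{A∘} and Γ{A•} infer Γ{∅} -/
  | cut (Γ : InCtx) (A : Formula) :
      Step .cut [Γ.prune.fillR (.fml A), Γ.fill (.fml A)] (Γ.fill .emp)
  /- nec: from Γ infer [Γ] -/
  | nec (S : FullSeq) :
      Step .nec [S] ⟨.emp, .br S.L S.R⟩
  /- ◇∘d: from Γ{[A∘]} infer Γ{(◇A)∘} -/
  | dDiaR (Γ : OutCtx) (A : Formula) :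
      Step .dDiaR [Γ.fillR (.br .emp (.fml A))] (Γ.fillR (.fml A.dia))
  /- □•d: from Γ{[A•]} infer Γ{(□A)•} -/
  | dBoxL (Γ : InCtx) (A : Formula) :
      Step .dBoxL [Γ.fill (LHS.br (.fml A))] (Γ.fill (.fml A.box))
  /- ◇∘t: from Γ{A∘} infer Γ{(◇A)∘} -/
  | tDiaR (Γ : OutCtx) (A : Formula) :
      Step .tDiaR [Γ.fillR (.fml A)] (Γ.fillR (.fml A.dia))
  /- □•t: from Γ{A•} infer Γ{(□A)•} -/
  | tBoxL (Γ : InCtx) (A : Formula) :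
      Step .tBoxL [Γ.fill (.fml A)] (Γ.fill (.fml A.box))
  /- ◇∘4: from Γ{[(◇A)∘,Δ]} infer Γ{(◇A)∘,[Δ]} -/
  | fourDiaR (Γ : OutCtx) (Δ : LHS) (A : Formula) :
      Step .fourDiaR [Γ.fillR (.br Δ (.fml A.dia))] (Γ.fillF ⟨Δ.br, .fml A.dia⟩)
  /- □•4: from Γ{[(□A)•,Δ]} infer Γ{(□A)•,[Δ]} -/
  | fourBoxLIn (Γ : InCtx) (Δ : LHS) (A : Formula) :
      Step .fourBoxL [Γ.fill (LHS.br ((LHS.fml A.box).comma Δ))]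
        (Γ.fill ((LHS.fml A.box).comma Δ.br))
  | fourBoxLOut (Γ : OutCtx) (Δ : FullSeq) (A : Formula) :
      Step .fourBoxL [Γ.fillR (.br ((LHS.fml A.box).comma Δ.L) Δ.R)]
        (Γ.fillF ⟨.fml A.box, .br Δ.L Δ.R⟩)
  /- d•: from Γ{[∅]} infer Γ{∅} -/
  | dSt (Γ : InCtx) :
      Step .dSt [Γ.fill (LHS.br .emp)] (Γ.fill .emp)
  /- t•: from Γ{[Σ]} infer Γ{Σ} -/
  | tStIn (Γ : InCtx) (Sg : LHS) :
      Step .tSt [Γ.fill Sg.br] (Γ.fill Sg)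
  | tStOut (Γ : OutCtx) (Sg : FullSeq) :
      Step .tSt [Γ.fillR (.br Sg.L Sg.R)] (Γ.fillF Sg)
  /- 4•: from Γ{[Σ]} infer Γ{[[Σ]]} -/
  | fourStIn (Γ : InCtx) (Sg : LHS) :
      Step .fourSt [Γ.fill Sg.br] (Γ.fill Sg.br.br)
  | fourStOut (Γ : OutCtx) (Sg : FullSeq) :
      Step .fourSt [Γ.fillR (.br Sg.L Sg.R)] (Γ.fillR (.br .emp (.br Sg.L Sg.R)))
  /- b•: from Γ{[[Σ],Δ]} infer Γ{Σ,[Δ]} -/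
  | bStIn (Γ : InCtx) (Sg Δ : LHS) :
      Step .bSt [Γ.fill (LHS.br (Sg.br.comma Δ))] (Γ.fill (Sg.comma Δ.br))
  | bStSig (Γ : OutCtx) (Sg : FullSeq) (Δ : LHS) :
      Step .bSt [Γ.fillR (.br Δ (.br Sg.L Sg.R))] (Γ.fillF ⟨Sg.L.comma Δ.br, Sg.R⟩)
  | bStDel (Γ : OutCtx) (Sg : LHS) (Δ : FullSeq) :
      Step .bSt [Γ.fillR (.br (Sg.br.comma Δ.L) Δ.R)] (Γ.fillF ⟨Sg, .br Δ.L Δ.R⟩)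
  /- 5•: from Γ{[[Σ],Δ]} infer Γ{[Σ],[Δ]} -/
  | fiveStIn (Γ : InCtx) (Sg Δ : LHS) :
      Step .fiveSt [Γ.fill (LHS.br (Sg.br.comma Δ))] (Γ.fill (Sg.br.comma Δ.br))
  | fiveStSig (Γ : OutCtx) (Sg : FullSeq) (Δ : LHS) :
      Step .fiveSt [Γ.fillR (.br Δ (.br Sg.L Sg.R))] (Γ.fillF ⟨Δ.br, .br Sg.L Sg.R⟩)
  | fiveStDel (Γ : OutCtx) (Sg : LHS) (Δ : FullSeq) :
      Step .fiveSt [Γ.fillR (.br (Sg.br.comma Δ.L) Δ.R)] (Γ.fillF ⟨Sg.br, .br Δ.L Δ.R⟩)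
  /- s4∘: from Γ{Δ{(◇A)∘}} infer Γ{(◇A)∘,Δ{∅}} -/
  | s4R (Γ Δ : OutCtx) (A : Formula) :
      Step .s4R [Γ.fillF (Δ.fillR (.fml A.dia))] (Γ.fillF ⟨Δ.fillE, .fml A.dia⟩)
  /- s4•: from Γ{Δ{(□A)•}} infer Γ{(□A)•,Δ{∅}} -/
  | s4LIn (Γ : InCtx) (Δ : OutCtx) (A : Formula) :
      Step .s4L [Γ.fill (Δ.fillL (.fml A.box))] (Γ.fill ((LHS.fml A.box).comma Δ.fillE))
  | s4LOut (Γ : OutCtx) (Δ : InCtx) (A : Formula) :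
      Step .s4L [Γ.fillF (Δ.fill (.fml A.box))]
        (Γ.fillF ⟨(LHS.fml A.box).comma (Δ.fill .emp).L, (Δ.fill .emp).R⟩)
  /- s4∘◇: from Γ{[Δ{A∘}]} infer Γ{(◇A)∘,[Δ{∅}]} -/
  | s4Rdia (Γ Δ : OutCtx) (A : Formula) :
      Step .s4Rdia [Γ.fillR (.br (Δ.fillR (.fml A)).L (Δ.fillR (.fml A)).R)]
        (Γ.fillF ⟨Δ.fillE.br, .fml A.dia⟩)
  /- s4•□: from Γ{[Δ{A•}]} infer Γ{(□A)•,[Δ{∅}]} -/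
  | s4LboxIn (Γ : InCtx) (Δ : OutCtx) (A : Formula) :
      Step .s4Lbox [Γ.fill (LHS.br (Δ.fillL (.fml A)))]
        (Γ.fill ((LHS.fml A.box).comma Δ.fillE.br))
  | s4LboxOut (Γ : OutCtx) (Δ : InCtx) (A : Formula) :
      Step .s4Lbox [Γ.fillR (.br (Δ.fill (.fml A)).L (Δ.fill (.fml A)).R)]
        (Γ.fillF ⟨.fml A.box, .br (Δ.fill .emp).L (Δ.fill .emp).R⟩)
  /- sb•: from Γ{Δ{[Σ]ⁿ}} infer Γ{Σ,Δ{∅}}, n the depth of Δ{ } -/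
  | sbStIn (Γ : InCtx) (Δ : OutCtx) (Sg : LHS) :
      Step .sbSt [Γ.fill (Δ.fillL (LHS.brn Δ.depth Sg))] (Γ.fill (Sg.comma Δ.fillE))
  | sbStMid (Γ : OutCtx) (Δ : InCtx) (Sg : LHS) :
      Step .sbSt [Γ.fillF (Δ.fill (LHS.brn Δ.depth Sg))]
        (Γ.fillF ⟨Sg.comma (Δ.fill .emp).L, (Δ.fill .emp).R⟩)
  | sbStOut (Γ Δ : OutCtx) (Sg : FullSeq) :
      Step .sbSt [Γ.fillF (Δ.fillF (FullSeq.nest Δ.depth Sg))]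
        (Γ.fillF ⟨Sg.L.comma Δ.fillE, Sg.R⟩)
  /- s5•: from Γ{Δ{[Σ]}} infer Γ{[Σ],Δ{∅}} -/
  | s5StIn (Γ : InCtx) (Δ : OutCtx) (Sg : LHS) :
      Step .s5St [Γ.fill (Δ.fillL Sg.br)] (Γ.fill (Sg.br.comma Δ.fillE))
  | s5StMid (Γ : OutCtx) (Δ : InCtx) (Sg : LHS) :
      Step .s5St [Γ.fillF (Δ.fill Sg.br)]
        (Γ.fillF ⟨Sg.br.comma (Δ.fill .emp).L, (Δ.fill .emp).R⟩)
  | s5StOut (Γ Δ : OutCtx) (Sg : FullSeq) :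
      Step .s5St [Γ.fillF (Δ.fillF ⟨.emp, .br Sg.L Sg.R⟩)]
        (Γ.fillF ⟨Δ.fillE, .br Sg.L Sg.R⟩)
  /- s5b•: from Γ{Δ{[Σ]ᵏ}} infer Γ{Σ,Δ{∅}}, 1 ≤ k ≤ depth of Δ{ } -/
  | s5bStIn (Γ : InCtx) (Δ : OutCtx) (Sg : LHS) (k : Nat)
      (h1 : 1 ≤ k) (h2 : k ≤ Δ.depth) :
      Step .s5bSt [Γ.fill (Δ.fillL (LHS.brn k Sg))] (Γ.fill (Sg.comma Δ.fillE))
  | s5bStMid (Γ : OutCtx) (Δ : InCtx) (Sg : LHS) (k : Nat)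
      (h1 : 1 ≤ k) (h2 : k ≤ Δ.depth) :
      Step .s5bSt [Γ.fillF (Δ.fill (LHS.brn k Sg))]
        (Γ.fillF ⟨Sg.comma (Δ.fill .emp).L, (Δ.fill .emp).R⟩)
  | s5bStOut (Γ Δ : OutCtx) (Sg : FullSeq) (k : Nat)
      (h1 : 1 ≤ k) (h2 : k ≤ Δ.depth) :
      Step .s5bSt [Γ.fillF (Δ.fillF (FullSeq.nest k Sg))]
        (Γ.fillF ⟨Sg.L.comma Δ.fillE, Sg.R⟩)
  /- sb5•: from Γ{Δ{[Σ]ᵏ}} infer Γ{[Σ],Δ{∅}}, 1 ≤ k ≤ depth of Δ{ } -/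
  | sb5StIn (Γ : InCtx) (Δ : OutCtx) (Sg : LHS) (k : Nat)
      (h1 : 1 ≤ k) (h2 : k ≤ Δ.depth) :
      Step .sb5St [Γ.fill (Δ.fillL (LHS.brn k Sg))] (Γ.fill (Sg.br.comma Δ.fillE))
  | sb5StMid (Γ : OutCtx) (Δ : InCtx) (Sg : LHS) (k : Nat)
      (h1 : 1 ≤ k) (h2 : k ≤ Δ.depth) :
      Step .sb5St [Γ.fillF (Δ.fill (LHS.brn k Sg))]
        (Γ.fillF ⟨Sg.br.comma (Δ.fill .emp).L, (Δ.fill .emp).R⟩)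
  | sb5StOut (Γ Δ : OutCtx) (Sg : FullSeq) (k : Nat)
      (h1 : 1 ≤ k) (h2 : k ≤ Δ.depth) :
      Step .sb5St [Γ.fillF (Δ.fillF (FullSeq.nest k Sg))]
        (Γ.fillF ⟨Δ.fillE, .br Sg.L Sg.R⟩)

/-! # Derivations -/

/-- `Deriv R n S`: the full sequent S has a derivation of height at most n
using the rules in R (sequents are treated up to AC-unit equivalence of
comma). -/
inductive Deriv (R : Set RuleName) : Nat → FullSeq → Prop
  | step {r : RuleName} {prems : List FullSeq} {S S' : FullSeq} {n : Nat} :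
      r ∈ R → Step r prems S → (∀ P ∈ prems, Deriv R n P) → SEq S S' →
      Deriv R (n+1) S'

/-- Provability in the system given by the rule set R. -/
def Provable (R : Set RuleName) (S : FullSeq) : Prop := ∃ n, Deriv R n S

/-- Derivations from a set of hypotheses (for derivability of rules). -/
inductive DerivFrom (R : Set RuleName) (H : Set FullSeq) : FullSeq → Prop
  | hyp {S S' : FullSeq} : S ∈ H → SEq S S' → DerivFrom R H S'
  | step {r : RuleName} {prems : List FullSeq} {S S' : FullSeq} :
      r ∈ R → Step r prems S → (∀ P ∈ prems, DerivFrom R H P) → SEq S S' →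
      DerivFrom R H S'

/-! # Rule sets -/

/-- The rules of NCK. -/
def NCKrules : Set RuleName :=
  {.id, .botL, .andL, .andR, .orL, .orR, .impL, .impR, .boxL, .boxR,
   .diaL, .diaR, .cont}

/-- The rules of NCK' (◇• replaced by ◇̂•). -/
def NCKP : Set RuleName :=
  {.id, .botL, .andL, .andR, .orL, .orR, .impL, .impR, .boxL, .boxR,
   .diaHatL, .diaR, .cont}

/-- X^{↓}: the logical ◇∘- and □•-rules for the axioms in X ⊆ {d,t,4}. -/
def lgRules (X : Set Ax) : Set RuleName := fun r =>
  (Ax.d ∈ X ∧ (r = .dDiaR ∨ r = .dBoxL)) ∨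
  (Ax.t ∈ X ∧ (r = .tDiaR ∨ r = .tBoxL)) ∨
  (Ax.four ∈ X ∧ (r = .fourDiaR ∨ r = .fourBoxL))

/-- The structural rule corresponding to a modal axiom. -/
def stRule : Ax → RuleName
  | .d => .dSt
  | .t => .tSt
  | .b => .bSt
  | .four => .fourSt
  | .five => .fiveSt

/-- Y•: the structural rules for the axioms in Y. -/
def stRules (Y : Set Ax) : Set RuleName := fun r => ∃ y ∈ Y, r = stRule y

/-- X^{↓}_s : the super variant of X^{↓}. -/
def lgRulesS (X : Set Ax) : Set RuleName := fun r =>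
  (r ∈ lgRules X ∧ r ≠ .fourDiaR ∧ r ≠ .fourBoxL) ∨
  (Ax.four ∈ X ∧ (r = .s4R ∨ r = .s4L ∨ r = .s4Rdia ∨ r = .s4Lbox))

/-- Y•_s : the super variant of Y•. -/
def stRulesS (Y : Set Ax) : Set RuleName := fun r =>
  (r ∈ stRules Y ∧ r ≠ .bSt ∧ r ≠ .fiveSt) ∨
  (Ax.b ∈ Y ∧ Ax.five ∉ Y ∧ r = .sbSt) ∨
  (Ax.five ∈ Y ∧ Ax.b ∉ Y ∧ r = .s5St) ∨
  (Ax.b ∈ Y ∧ Ax.five ∈ Y ∧ (r = .s5bSt ∨ r = .sb5St))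

/-- A safe pair of axiom sets. -/
def SafePair (X Y : Set Ax) : Prop :=
  X ⊆ {Ax.t, Ax.four} ∧ Y ⊆ {Ax.d, Ax.b, Ax.five} ∧
  (Ax.t ∈ X → Ax.five ∈ Y → Ax.b ∈ Y) ∧
  ((Ax.b ∈ Y ∨ Ax.five ∈ Y) → Ax.four ∈ X)


/-! # Auxiliary lemmas -/

theorem Hck.id' {X : Set Ax} (A : Formula) : Hck X (A.imp A) :=
  ((Hck.imp2 A (A.imp A) A).mp (Hck.imp1 A (A.imp A))).mp (Hck.imp1 A A)

/-- Deduction under a list of hypotheses (innermost first). -/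
def Ded (X : Set Ax) (G : List Formula) (A : Formula) : Prop :=
  Hck X (G.foldl (fun a c => c.imp a) A)

theorem Ded.nil {X : Set Ax} {A : Formula} (h : Hck X A) : Ded X [] A := h

theorem Ded.cons_def {X : Set Ax} {G : List Formula} {A C : Formula} :
    Ded X (C :: G) A = Ded X G (C.imp A) := rfl

theorem mem0 {A : Formula} {G : List Formula} : A ∈ A :: G :=
  List.mem_cons_self

theorem mem1 {A B : Formula} {G : List Formula} : A ∈ B :: A :: G :=
  List.mem_cons_of_mem _ mem0

theorem mem2 {A B C : Formula} {G : List Formula} : A ∈ B :: C :: A :: G :=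
  List.mem_cons_of_mem _ mem1

theorem Ded.thm {X : Set Ax} {G : List Formula} {A : Formula}
    (h : Hck X A) : Ded X G A := by
  induction G generalizing A with
  | nil => exact h
  | cons C G ih => rw [Ded.cons_def]; exact ih ((Hck.imp1 A C).mp h)

theorem Ded.mp {X : Set Ax} {G : List Formula} {A B : Formula}
    (h1 : Ded X G (A.imp B)) (h2 : Ded X G A) : Ded X G B := by
  induction G generalizing A B with
  | nil => exact Hck.mp h1 h2
  | cons C G ih =>
    rw [Ded.cons_def] at h1 h2 ⊢
    exact ih (ih (Ded.thm (Hck.imp2 C A B)) h1) h2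

theorem Ded.ax {X : Set Ax} {G : List Formula} {A : Formula}
    (h : A ∈ G) : Ded X G A := by
  induction G with
  | nil => exact absurd h List.not_mem_nil
  | cons C G ih =>
    rw [Ded.cons_def]
    rcases List.mem_cons.mp h with h | h
    · subst h; exact Ded.thm (Hck.id' A)
    · exact Ded.mp (Ded.thm (Hck.imp1 A C)) (ih h)

theorem Ded.wk {X : Set Ax} {G : List Formula} {A C : Formula}
    (h : Ded X G A) : Ded X (C :: G) A := by
  rw [Ded.cons_def]; exact Ded.mp (Ded.thm (Hck.imp1 A C)) h

theorem Ded.intro {X : Set Ax} {G : List Formula} {A B : Formula}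
    (h : Ded X (A :: G) B) : Ded X G (A.imp B) := h

theorem Ded.andI {X : Set Ax} {G : List Formula} {A B : Formula} (h1 : Ded X G A) (h2 : Ded X G B) :
    Ded X G (A.and B) := Ded.mp (Ded.mp (Ded.thm (Hck.andI A B)) h1) h2

theorem Ded.andE1 {X : Set Ax} {G : List Formula} {A B : Formula} (h : Ded X G (A.and B)) : Ded X G A :=
  Ded.mp (Ded.thm (Hck.andE1 A B)) h

theorem Ded.andE2 {X : Set Ax} {G : List Formula} {A B : Formula} (h : Ded X G (A.and B)) : Ded X G B :=
  Ded.mp (Ded.thm (Hck.andE2 A B)) h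

theorem Hck.boxMono {X : Set Ax} {A B : Formula} (h : Hck X (A.imp B)) :
    Hck X ((A.box).imp (B.box)) := (Hck.k1 A B).mp (Hck.nec h)

theorem Hck.boxAnd {X : Set Ax} (A B : Formula) :
    Hck X (((A.box).and (B.box)).imp ((A.and B).box)) := by
  apply Ded.intro (G := [])
  have hc : Ded X [(A.box).and (B.box)] ((A.box).and (B.box)) :=
    Ded.ax mem0
  exact Ded.mp (Ded.mp (Ded.thm (Hck.k1 B (A.and B)))
      (Ded.mp (Ded.thm (Hck.boxMono (Hck.andI A B))) (Ded.andE1 hc)))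
    (Ded.andE2 hc)

/-- cons step for two-premise output-context lemmas. -/
theorem Hck.impBox2 {X : Set Ax} {Φ P1 P2 P3 : Formula}
    (h : Hck X ((P1.and P2).imp P3)) :
    Hck X (((Φ.imp P1.box).and (Φ.imp P2.box)).imp (Φ.imp P3.box)) := by
  apply Ded.intro (G := []); apply Ded.intro
  have hc : Ded X [Φ, (Φ.imp P1.box).and (Φ.imp P2.box)]
      ((Φ.imp P1.box).and (Φ.imp P2.box)) := Ded.ax (.tail _ mem0)
  have hφ : Ded X [Φ, (Φ.imp P1.box).and (Φ.imp P2.box)] Φ := Ded.ax mem0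
  exact Ded.mp (Ded.thm (Hck.boxMono h))
    (Ded.mp (Ded.thm (Hck.boxAnd P1 P2))
      (Ded.andI (Ded.mp (Ded.andE1 hc) hφ) (Ded.mp (Ded.andE2 hc) hφ)))

/-- hole-case tautology for `fillF2`. -/
theorem Hck.tautF {X : Set Ax} {Φ L1 R1 L2 R2 L3 R3 : Formula}
    (h : Hck X (((L1.imp R1).and (L2.imp R2)).imp (L3.imp R3))) :
    Hck X ((((Φ.and L1).imp R1).and ((Φ.and L2).imp R2)).imp
      ((Φ.and L3).imp R3)) := by
  apply Ded.intro (G := []); apply Ded.intro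
  set c := ((Φ.and L1).imp R1).and ((Φ.and L2).imp R2)
  set G : List Formula := [Φ.and L3, c]
  have hc : Ded X G c := Ded.ax (.tail _ mem0)
  have hp : Ded X G (Φ.and L3) := Ded.ax mem0
  have hφ := Ded.andE1 hp
  have f1 : Ded X G (L1.imp R1) := by
    apply Ded.intro
    exact Ded.mp (Ded.andE1 (Ded.ax (X := X) (.tail _ (.tail _ mem0))))
      (Ded.andI (Ded.wk hφ) (Ded.ax mem0))
  have f2 : Ded X G (L2.imp R2) := by
    apply Ded.intro
    exact Ded.mp (Ded.andE2 (Ded.ax (X := X) (.tail _ (.tail _ mem0))))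
      (Ded.andI (Ded.wk hφ) (Ded.ax mem0))
  exact Ded.mp (Ded.mp (Ded.thm h) (Ded.andI f1 f2)) (Ded.andE2 hp)

theorem fillR_cons_fm (Φ : LHS) (C : OutCtx) (Ψ : RHS) :
    ((OutCtx.cons Φ C).fillR Ψ).fm = Φ.fm.imp ((C.fillR Ψ).fm).box := rfl

theorem fillF_cons_fm (Φ : LHS) (C : OutCtx) (S : FullSeq) :
    ((OutCtx.cons Φ C).fillF S).fm = Φ.fm.imp ((C.fillF S).fm).box := rfl

/-- Two-premise lemma for output contexts filled with RHS sequents. -/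
theorem fillR2 {X : Set Ax} (Γ : OutCtx) {Ψ₁ Ψ₂ Ψ₃ : RHS}
    (h : Hck X ((Ψ₁.fm.and Ψ₂.fm).imp Ψ₃.fm)) :
    Hck X (((Γ.fillR Ψ₁).fm.and (Γ.fillR Ψ₂).fm).imp (Γ.fillR Ψ₃).fm) := by
  induction Γ with
  | hole Φ =>
    show Hck X (((Φ.fm.imp Ψ₁.fm).and (Φ.fm.imp Ψ₂.fm)).imp (Φ.fm.imp Ψ₃.fm))
    apply Ded.intro (G := []); apply Ded.intro
    have hc : Ded X [Φ.fm, (Φ.fm.imp Ψ₁.fm).and (Φ.fm.imp Ψ₂.fm)]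
        ((Φ.fm.imp Ψ₁.fm).and (Φ.fm.imp Ψ₂.fm)) := Ded.ax (.tail _ mem0)
    have hφ : Ded X [Φ.fm, (Φ.fm.imp Ψ₁.fm).and (Φ.fm.imp Ψ₂.fm)] Φ.fm :=
      Ded.ax mem0
    exact Ded.mp (Ded.thm h)
      (Ded.andI (Ded.mp (Ded.andE1 hc) hφ) (Ded.mp (Ded.andE2 hc) hφ))
  | cons Φ C ih =>
    rw [fillR_cons_fm, fillR_cons_fm, fillR_cons_fm]
    exact Hck.impBox2 ih

/-- Two-premise lemma for output contexts filled with full sequents. -/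
theorem fillF2 {X : Set Ax} (Γ : OutCtx) {S₁ S₂ S₃ : FullSeq}
    (h : Hck X ((S₁.fm.and S₂.fm).imp S₃.fm)) :
    Hck X (((Γ.fillF S₁).fm.and (Γ.fillF S₂).fm).imp (Γ.fillF S₃).fm) := by
  induction Γ with
  | hole Φ => exact Hck.tautF h
  | cons Φ C ih =>
    rw [fillF_cons_fm, fillF_cons_fm, fillF_cons_fm]
    exact Hck.impBox2 ih

theorem comp_fillR (C1 : OutCtx) : ∀ (C2 : OutCtx) (Ψ : RHS),
    (C1.comp C2).fillR Ψ = C1.fillF (C2.fillR Ψ) := by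
  induction C1 with
  | hole Φ =>
    intro C2 Ψ
    cases C2 <;> rfl
  | cons Φ C ih =>
    intro C2 Ψ
    simp [OutCtx.comp, OutCtx.fillR, OutCtx.fillF, ih]

/-- Key lemma for the inner context of ⊃• and cut. -/
theorem innerKey {X : Set Ax} (C : OutCtx) (A : Formula) (Δ₁ Δ₂ : LHS)
    (h : Hck X ((A.and Δ₁.fm).imp Δ₂.fm)) :
    Hck X (((C.fillR (.fml A)).fm.and (C.fillL Δ₁).fm).imp
      (C.fillL Δ₂).fm) := by
  induction C with
  | hole Φ =>
    show Hck X (((Φ.fm.imp A).and (Φ.fm.and Δ₁.fm)).imp (Φ.fm.and Δ₂.fm))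
    apply Ded.intro (G := [])
    have hc : Ded X [(Φ.fm.imp A).and (Φ.fm.and Δ₁.fm)]
        ((Φ.fm.imp A).and (Φ.fm.and Δ₁.fm)) := Ded.ax mem0
    have hφ := Ded.andE1 (Ded.andE2 hc)
    exact Ded.andI hφ (Ded.mp (Ded.thm h)
      (Ded.andI (Ded.mp (Ded.andE1 hc) hφ) (Ded.andE2 (Ded.andE2 hc))))
  | cons Φ C ih =>
    -- goal: ((Φ ⊃ □PC) ∧ (Φ ∧ ◇Q1)) ⊃ (Φ ∧ ◇Q2)
    show Hck X (((Φ.fm.imp ((C.fillR (.fml A)).fm).box).and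
        (Φ.fm.and ((C.fillL Δ₁).fm).dia)).imp
      (Φ.fm.and ((C.fillL Δ₂).fm).dia))
    set PC := (C.fillR (.fml A)).fm
    set Q1 := (C.fillL Δ₁).fm
    set Q2 := (C.fillL Δ₂).fm
    have cur : Hck X (PC.imp (Q1.imp Q2)) := by
      apply Ded.intro (G := []); apply Ded.intro
      exact Ded.mp (Ded.thm ih)
        (Ded.andI (Ded.ax (.tail _ mem0)) (Ded.ax mem0))
    have bk : Hck X ((PC.box).imp ((Q1.dia).imp (Q2.dia))) := by
      apply Ded.intro (G := [])
      exact Ded.mp (Ded.thm (Hck.k2 Q1 Q2))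
        (Ded.mp (Ded.thm (Hck.boxMono cur)) (Ded.ax mem0))
    apply Ded.intro (G := [])
    have hc : Ded X [(Φ.fm.imp (PC.box)).and (Φ.fm.and (Q1.dia))]
        ((Φ.fm.imp (PC.box)).and (Φ.fm.and (Q1.dia))) := Ded.ax mem0
    have hφ := Ded.andE1 (Ded.andE2 hc)
    exact Ded.andI hφ (Ded.mp (Ded.mp (Ded.thm bk)
      (Ded.mp (Ded.andE1 hc) hφ)) (Ded.andE2 (Ded.andE2 hc)))

/-- Lemma 4.9: for any instance, with premises Γ₁, Γ₂ and
conclusion Γ₃, of one of the rules ∧∘, ∨•, ⊃•, cut, the formula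
(fm(Γ₁)∧fm(Γ₂))⊃fm(Γ₃) is provable in HCK+X. -/
theorem statement11 (X : Set Ax) (r : RuleName)
    (hr : r = RuleName.andR ∨ r = RuleName.orL ∨ r = RuleName.impL ∨
          r = RuleName.cut)
    (Γ₁ Γ₂ Γ₃ : FullSeq) (h : Step r [Γ₁, Γ₂] Γ₃) :
    Hck X ((Γ₁.fm.and Γ₂.fm).imp Γ₃.fm) := by
  cases h with
  | andR Γ A B =>
    exact fillR2 Γ (Hck.id' _)
  | orL Γ Pn A B =>
    refine fillF2 Γ (S₁ := ⟨.fml A, Pn⟩) (S₂ := ⟨.fml B, Pn⟩)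
      (S₃ := ⟨.fml (A.or B), Pn⟩) ?_
    show Hck X (((A.imp Pn.fm).and (B.imp Pn.fm)).imp ((A.or B).imp Pn.fm))
    apply Ded.intro (G := [])
    have hc : Ded X [(A.imp Pn.fm).and (B.imp Pn.fm)]
        ((A.imp Pn.fm).and (B.imp Pn.fm)) := Ded.ax mem0
    exact Ded.mp (Ded.mp (Ded.thm (Hck.orE A B Pn.fm)) (Ded.andE1 hc))
      (Ded.andE2 hc)
  | impL Γ A B =>
    rw [InCtx.prune, comp_fillR]
    show Hck X ((((Γ.outer.fillF (Γ.inner.fillR (.fml A))).fm).and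
        ((Γ.outer.fillF ⟨Γ.inner.fillL (.fml B), Γ.out⟩).fm)).imp
      ((Γ.outer.fillF ⟨Γ.inner.fillL (.fml (A.imp B)), Γ.out⟩).fm))
    apply fillF2 Γ.outer
    show Hck X ((((Γ.inner.fillR (.fml A)).fm).and
        (((Γ.inner.fillL (.fml B)).fm).imp Γ.out.fm)).imp
      (((Γ.inner.fillL (.fml (A.imp B))).fm).imp Γ.out.fm))
    have key : Hck X (((Γ.inner.fillR (.fml A)).fm.and
        (Γ.inner.fillL (.fml (A.imp B))).fm).imp
        (Γ.inner.fillL (.fml B)).fm) := by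
      apply innerKey
      show Hck X ((A.and (A.imp B)).imp B)
      apply Ded.intro (G := [])
      have hc : Ded X [A.and (A.imp B)] (A.and (A.imp B)) := Ded.ax mem0
      exact Ded.mp (Ded.andE2 hc) (Ded.andE1 hc)
    apply Ded.intro (G := []); apply Ded.intro
    set T1 := (Γ.inner.fillR (.fml A)).fm
    set LB := (Γ.inner.fillL (.fml B)).fm
    set LAB := (Γ.inner.fillL (.fml (A.imp B))).fm
    have hc : Ded X [LAB, T1.and (LB.imp Γ.out.fm)]
        (T1.and (LB.imp Γ.out.fm)) := Ded.ax (.tail _ mem0)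
    exact Ded.mp (Ded.andE2 hc) (Ded.mp (Ded.thm key)
      (Ded.andI (Ded.andE1 hc) (Ded.ax mem0)))
  | cut Γ A =>
    rw [InCtx.prune, comp_fillR]
    apply fillF2 Γ.outer
    show Hck X ((((Γ.inner.fillR (.fml A)).fm).and
        (((Γ.inner.fillL (.fml A)).fm).imp Γ.out.fm)).imp
      (((Γ.inner.fillL .emp).fm).imp Γ.out.fm))
    have key : Hck X (((Γ.inner.fillR (.fml A)).fm.and
        (Γ.inner.fillL .emp).fm).imp (Γ.inner.fillL (.fml A)).fm) := by
      apply innerKey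
      show Hck X ((A.and Formula.top).imp A)
      exact Hck.andE1 A Formula.top
    apply Ded.intro (G := []); apply Ded.intro
    set T1 := (Γ.inner.fillR (.fml A)).fm
    set LA := (Γ.inner.fillL (.fml A)).fm
    set LE := (Γ.inner.fillL .emp).fm
    have hc : Ded X [LE, T1.and (LA.imp Γ.out.fm)]
        (T1.and (LA.imp Γ.out.fm)) := Ded.ax (.tail _ mem0)
    exact Ded.mp (Ded.andE2 hc) (Ded.mp (Ded.thm key)
      (Ded.andI (Ded.andE1 hc) (Ded.ax mem0)))
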